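/- Let a > b > 0, η > ξ > 0, m, ρ > 0, and assume m(ξ−η) + ρπ(ξa² − ηb²) > 0. Define F₁(θ) = a·η·artanh(√((η−ξ)/η)·cos θ)/√(η(η−ξ)) and F₂(θ) = −a·√(m + ρπa²)·artanh(√((a²−b²)ρπ)·cos θ/√(m + ρπa²))/√(ρπ(a²−b²)). Then the function F₂ − F₁ is strictly increasing on the interval (0, π/2). -/

import Mathlib

open Real Set

/-- The inverse hyperbolic tangent. -/
noncomputable def _root_.artanh (x : ℝ) : ℝ := (1 / 2) * Real.log ((1 + x) / (1 - x))

lemma hasDerivAt_artanh {x : ℝ} (hx : |x| < 1) :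
    HasDerivAt _root_.artanh (1 / (1 - x ^ 2)) x := by
  have hx1 : -1 < x := (abs_lt.mp hx).1
  have hx2 : x < 1 := (abs_lt.mp hx).2
  have h1 : (0:ℝ) < 1 + x := by linarith
  have h2 : (0:ℝ) < 1 - x := by linarith
  have hsq : (1:ℝ) - x ^ 2 ≠ 0 := by nlinarith
  have hg : HasDerivAt (fun y : ℝ => (1 / 2) * (Real.log (1 + y) - Real.log (1 - y)))
      (1 / (1 - x ^ 2)) x := by
    have hlog1 : HasDerivAt (fun y : ℝ => Real.log (1 + y)) (1 / (1 + x)) x := by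
      have h : HasDerivAt (fun y : ℝ => 1 + y) 1 x := (hasDerivAt_id x).const_add 1
      simpa [Function.comp_def] using (Real.hasDerivAt_log h1.ne').comp x h
    have hlog2 : HasDerivAt (fun y : ℝ => Real.log (1 - y)) (-(1 / (1 - x))) x := by
      have h : HasDerivAt (fun y : ℝ => 1 - y) (-1) x := by
        exact (hasDerivAt_id x).const_sub 1
      have := (Real.hasDerivAt_log h2.ne').comp x h
      simpa [Function.comp_def] using this
    have := ((hlog1.sub hlog2).const_mul (1/2 : ℝ))
    refine this.congr_deriv ?_
    rw [show (1:ℝ) - x ^ 2 = (1 + x) * (1 - x) by ring]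
    field_simp
    ring
  refine hg.congr_of_eventuallyEq ?_
  have hopen : IsOpen (Set.Ioo (-1:ℝ) 1) := isOpen_Ioo
  filter_upwards [hopen.mem_nhds ⟨hx1, hx2⟩] with y hy
  have hy1 : (0:ℝ) < 1 + y := by linarith [hy.1]
  have hy2 : (0:ℝ) < 1 - y := by linarith [hy.2]
  simp only [_root_.artanh, Real.log_div hy1.ne' hy2.ne']

lemma hasDerivAt_artanh_cos {c θ : ℝ} (hc0 : 0 ≤ c) (hc1 : c < 1) :
    HasDerivAt (fun t : ℝ => _root_.artanh (c * Real.cos t))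
      ((1 / (1 - (c * Real.cos θ) ^ 2)) * (c * (-Real.sin θ))) θ := by
  have hcos : HasDerivAt (fun t : ℝ => c * Real.cos t) (c * (-Real.sin θ)) θ :=
    (Real.hasDerivAt_cos θ).const_mul c
  have habs : |c * Real.cos θ| < 1 := by
    rw [abs_mul, abs_of_nonneg hc0]
    calc c * |Real.cos θ| ≤ c * 1 :=
          mul_le_mul_of_nonneg_left (Real.abs_cos_le_one θ) hc0
    _ < 1 := by linarith
  have := (hasDerivAt_artanh habs).comp θ hcos
  exact this

lemma one_sub_sq_pos_of_abs_lt {u : ℝ} (h : |u| < 1) : 0 < 1 - u ^ 2 := by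
  obtain ⟨hl, hr⟩ := abs_lt.mp h
  nlinarith

/-- The difference `F₂ − F₁` of the primitives of the ideal and viscous dynamics
coefficients is strictly increasing on `(0, π/2)` when
`m(ξ−η) + ρπ(ξa² − ηb²) > 0`. -/
theorem F2_sub_F1_strictMono (a b m ρ ξ η : ℝ)
    (hb : 0 < b) (hba : b < a) (hξ : 0 < ξ) (hξη : ξ < η) (hm : 0 < m) (hρ : 0 < ρ)
    (hkey : m * (ξ - η) + ρ * π * (ξ * a ^ 2 - η * b ^ 2) > 0)
    (F₁ F₂ : ℝ → ℝ)
    (hF₁ : ∀ θ : ℝ, F₁ θ =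
      a * η * _root_.artanh (Real.sqrt ((η - ξ) / η) * Real.cos θ) / Real.sqrt (η * (η - ξ)))
    (hF₂ : ∀ θ : ℝ, F₂ θ =
      -a * Real.sqrt (m + ρ * π * a ^ 2) *
        _root_.artanh (Real.sqrt ((a ^ 2 - b ^ 2) * ρ * π) * Real.cos θ /
          Real.sqrt (m + ρ * π * a ^ 2)) / Real.sqrt (ρ * π * (a ^ 2 - b ^ 2))) :
    StrictMonoOn (fun θ => F₂ θ - F₁ θ) (Set.Ioo (0:ℝ) (π / 2)) := by
  have hπ : (0:ℝ) < π := Real.pi_pos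
  have ha : 0 < a := hb.trans hba
  have hA : 0 < m + ρ * π * a ^ 2 := by positivity
  have hab2 : b ^ 2 < a ^ 2 := by nlinarith
  have hBpos : 0 < (a ^ 2 - b ^ 2) * ρ * π := by nlinarith
  have hBA : (a ^ 2 - b ^ 2) * ρ * π < m + ρ * π * a ^ 2 := by
    have h1 : 0 ≤ ρ * π * b ^ 2 := by positivity
    nlinarith
  have hηξ : 0 < η * (η - ξ) := by nlinarith
  set c₁ : ℝ := Real.sqrt ((η - ξ) / η) with hc₁def
  set c₂ : ℝ := Real.sqrt ((a ^ 2 - b ^ 2) * ρ * π) / Real.sqrt (m + ρ * π * a ^ 2)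
    with hc₂def
  set K₁ : ℝ := a * η / Real.sqrt (η * (η - ξ)) with hK₁def
  set K₂ : ℝ := -a * Real.sqrt (m + ρ * π * a ^ 2) / Real.sqrt (ρ * π * (a ^ 2 - b ^ 2))
    with hK₂def
  have hc₁0 : 0 < c₁ := by
    rw [hc₁def]; exact Real.sqrt_pos.mpr (div_pos (by linarith) (by linarith))
  have hc₁1 : c₁ < 1 := by
    rw [hc₁def, show (1:ℝ) = Real.sqrt 1 by simp]
    apply Real.sqrt_lt_sqrt (div_nonneg (by linarith) (by linarith))
    rw [div_lt_one (by linarith)]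
    linarith
  have hsA : 0 < Real.sqrt (m + ρ * π * a ^ 2) := Real.sqrt_pos.mpr hA
  have hsB : 0 < Real.sqrt ((a ^ 2 - b ^ 2) * ρ * π) := Real.sqrt_pos.mpr hBpos
  have hsB' : 0 < Real.sqrt (ρ * π * (a ^ 2 - b ^ 2)) := by
    apply Real.sqrt_pos.mpr; nlinarith
  have hc₂0 : 0 < c₂ := by rw [hc₂def]; exact div_pos hsB hsA
  have hc₂1 : c₂ < 1 := by
    rw [hc₂def, div_lt_one hsA]
    exact Real.sqrt_lt_sqrt hBpos.le hBA
  have hs₁ : 0 < Real.sqrt (η * (η - ξ)) := Real.sqrt_pos.mpr hηξ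
  have hK₁pos : 0 < K₁ := by
    rw [hK₁def]; exact div_pos (mul_pos ha (by linarith)) hs₁
  have hK₂neg : K₂ < 0 := by
    rw [hK₂def, neg_mul, neg_div, neg_lt_zero]
    exact div_pos (by positivity) hsB'
  have hfun : (fun θ => F₂ θ - F₁ θ) =
      fun θ => K₂ * _root_.artanh (c₂ * Real.cos θ) - K₁ * _root_.artanh (c₁ * Real.cos θ) := by
    funext θ
    have harg : Real.sqrt ((a ^ 2 - b ^ 2) * ρ * π) * Real.cos θ /
        Real.sqrt (m + ρ * π * a ^ 2) = c₂ * Real.cos θ := by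
      rw [hc₂def]; ring
    rw [hF₁ θ, hF₂ θ, harg, hK₁def, hK₂def]
    ring
  rw [hfun]
  set f' : ℝ → ℝ := fun θ =>
    K₂ * ((1 / (1 - (c₂ * Real.cos θ) ^ 2)) * (c₂ * (-Real.sin θ))) -
      K₁ * ((1 / (1 - (c₁ * Real.cos θ) ^ 2)) * (c₁ * (-Real.sin θ))) with hf'def
  have hderiv : ∀ θ : ℝ, HasDerivAt
      (fun θ => K₂ * _root_.artanh (c₂ * Real.cos θ) - K₁ * _root_.artanh (c₁ * Real.cos θ))
      (f' θ) θ := fun θ =>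
    ((hasDerivAt_artanh_cos hc₂0.le hc₂1).const_mul K₂).sub
      ((hasDerivAt_artanh_cos hc₁0.le hc₁1).const_mul K₁)
  apply strictMonoOn_of_hasDerivWithinAt_pos (convex_Ioo _ _)
    (fun x _ => (hderiv x).continuousAt.continuousWithinAt)
    (fun x hx => ((hderiv x).hasDerivWithinAt))
  intro x hx
  rw [interior_Ioo] at hx
  have hsin : 0 < Real.sin x := Real.sin_pos_of_pos_of_lt_pi hx.1
    (lt_trans hx.2 (by linarith))
  have habs : ∀ c : ℝ, 0 ≤ c → c < 1 → |c * Real.cos x| < 1 := by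
    intro c hc0 hc1
    rw [abs_mul, abs_of_nonneg hc0]
    calc c * |Real.cos x| ≤ c * 1 :=
          mul_le_mul_of_nonneg_left (Real.abs_cos_le_one x) hc0
    _ < 1 := by linarith
  have hd₁ : 0 < 1 - (c₁ * Real.cos x) ^ 2 :=
    one_sub_sq_pos_of_abs_lt (habs c₁ hc₁0.le hc₁1)
  have hd₂ : 0 < 1 - (c₂ * Real.cos x) ^ 2 :=
    one_sub_sq_pos_of_abs_lt (habs c₂ hc₂0.le hc₂1)
  have he : f' x = (-K₂) * ((1 / (1 - (c₂ * Real.cos x) ^ 2)) * (c₂ * Real.sin x)) +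
      K₁ * ((1 / (1 - (c₁ * Real.cos x) ^ 2)) * (c₁ * Real.sin x)) := by
    rw [hf'def]; ring
  rw [he]
  have ht₂ : 0 < (-K₂) * ((1 / (1 - (c₂ * Real.cos x) ^ 2)) * (c₂ * Real.sin x)) :=
    mul_pos (by linarith) (mul_pos (by positivity) (mul_pos hc₂0 hsin))
  have ht₁ : 0 < K₁ * ((1 / (1 - (c₁ * Real.cos x) ^ 2)) * (c₁ * Real.sin x)) :=
    mul_pos hK₁pos (mul_pos (by positivity) (mul_pos hc₁0 hsin))
  linarith
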